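/- Filtration argument for acyclicity (the engine of Theorem 10.1, H_i(δ) = 0 for i > 0): let δ₀ : M →ₗ M have degree 0, δ₁ : M →ₗ M have degree 1, set δ = δ₀ + δ₁, and assume δ ∘ δ = 0. Assume δ₁-acyclicity: every x ∈ M_0 with δ₁ x = 0 is zero, and for every n ≥ 1, every x ∈ M_n with δ₁ x = 0 lies in δ₁(M_{n−1}). Then every a ∈ M with δ a = 0 lies in the range of δ; i.e., the cohomology of δ on M vanishes. -/

import Mathlib

/-- Filtration argument for acyclicity: if `δ = δ₀ + δ₁` is a differential
(`δ² = 0`) with `δ₀` of degree `0` and `δ₁` of degree `1` for an internal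
ℕ-grading of `M`, and `δ₁` is acyclic in the graded sense (its kernel vanishes in
degree `0` and, in degree `n ≥ 1`, is contained in `δ₁(M_{n-1})`), then every
`δ`-cocycle is a `δ`-coboundary. -/
theorem filtration_acyclicity
    {R M : Type} [CommRing R] [AddCommGroup M] [Module R M]
    (Mn : ℕ → Submodule R M) (hM : DirectSum.IsInternal Mn)
    (δ₀ δ₁ : M →ₗ[R] M)
    (h₀ : ∀ n : ℕ, ∀ x ∈ Mn n, δ₀ x ∈ Mn (n + 0))
    (h₁ : ∀ n : ℕ, ∀ x ∈ Mn n, δ₁ x ∈ Mn (n + 1))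
    (hnil : (δ₀ + δ₁) ∘ₗ (δ₀ + δ₁) = 0)
    (hacy₀ : ∀ x ∈ Mn 0, δ₁ x = 0 → x = 0)
    (hacy : ∀ n : ℕ, ∀ x ∈ Mn (n + 1), δ₁ x = 0 → ∃ y ∈ Mn n, δ₁ y = x) :
    ∀ a : M, (δ₀ + δ₁) a = 0 → ∃ b : M, (δ₀ + δ₁) b = a := by
  set F : ℕ → Submodule R M := fun N => (Finset.range (N + 1)).sup Mn with hF
  -- a nonzero element of `Mn (N+1)` cannot lie in `F N`
  have hdisj : ∀ N : ℕ, ∀ x ∈ Mn (N + 1), x ∈ F N → x = 0 := by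
    intro N x hx hxF
    have hind := hM.submodule_iSupIndep
    have hd : Disjoint (Mn (N + 1)) (⨆ j ∈ Set.Iio (N + 1), Mn j) :=
      hind.disjoint_biSup (by simp)
    have hxF2 : x ∈ (Finset.range (N + 1)).sup Mn := hxF
    rw [Finset.sup_eq_iSup] at hxF2
    have hle : (⨆ j ∈ Finset.range (N + 1), Mn j) ≤ ⨆ j ∈ Set.Iio (N + 1), Mn j := by
      refine iSup_le fun i => iSup_le fun hi => ?_
      exact le_iSup_of_le i (le_iSup_of_le (Finset.mem_range.mp hi) le_rfl)
    exact Submodule.disjoint_def.mp hd x hx (hle hxF2)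
  have hF0 : ∀ N : ℕ, ∀ x ∈ F N, δ₀ x ∈ F N := by
    intro N
    have h : F N ≤ (F N).comap δ₀ := by
      apply Finset.sup_le
      intro i hi x hx
      exact Submodule.mem_comap.mpr (Finset.le_sup (f := Mn) hi (by simpa using h₀ i x hx))
    exact fun x hx => h hx
  have hF1 : ∀ N : ℕ, ∀ x ∈ F N, δ₁ x ∈ F (N + 1) := by
    intro N
    have h : F N ≤ (F (N + 1)).comap δ₁ := by
      apply Finset.sup_le
      intro i hi x hx
      have hi' : i + 1 ∈ Finset.range (N + 2) := by
        simp only [Finset.mem_range] at hi ⊢; omega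
      exact Submodule.mem_comap.mpr (Finset.le_sup (f := Mn) hi' (h₁ i x hx))
    exact fun x hx => h hx
  have hmono : ∀ N : ℕ, F N ≤ F (N + 1) := by
    intro N
    apply Finset.sup_mono
    intro i hi
    simp only [Finset.mem_range] at hi ⊢; omega
  have key : ∀ N : ℕ, ∀ a ∈ F N, (δ₀ + δ₁) a = 0 → ∃ b : M, (δ₀ + δ₁) b = a := by
    intro N
    induction N with
    | zero =>
      intro a haF hδa
      have haM : a ∈ Mn 0 := by simpa [hF] using haF
      have hsum : δ₀ a + δ₁ a = 0 := by simpa using hδa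
      have hδ1 : δ₁ a = -δ₀ a := (neg_eq_of_add_eq_zero_right hsum).symm
      have h1 : δ₁ a ∈ Mn 1 := by simpa using h₁ 0 a haM
      have h0 : δ₁ a ∈ F 0 := by
        rw [hδ1]; exact neg_mem (hF0 0 a haF)
      have : a = 0 := hacy₀ a haM (hdisj 0 _ h1 h0)
      exact ⟨0, by simp [this]⟩
    | succ N ih =>
      intro a haF hδa
      have haF' : a ∈ (Finset.range (N + 1 + 1)).sup Mn := haF
      rw [Finset.range_add_one, Finset.sup_insert] at haF'
      obtain ⟨t, ht, a', ha', rfl⟩ := Submodule.mem_sup.mp haF'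
      have hδa' : δ₀ t + δ₁ t + (δ₀ a' + δ₁ a') = 0 := by
        have h : δ₀ (t + a') + δ₁ (t + a') = 0 := by simpa using hδa
        simp only [map_add] at h
        rw [← h]; abel
      have hδ1t : δ₁ t = -(δ₀ t + δ₀ a' + δ₁ a') :=
        eq_neg_of_add_eq_zero_left (by rw [← hδa']; abel)
      have ht2 : δ₁ t ∈ Mn (N + 2) := by simpa using h₁ (N + 1) t ht
      have htop : δ₀ t ∈ F (N + 1) :=
        Finset.le_sup (f := Mn) (Finset.mem_range.mpr (Nat.lt_succ_self (N + 1))) (by simpa using h₀ (N + 1) t ht)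
      have htF : δ₁ t ∈ F (N + 1) := by
        rw [hδ1t]
        exact neg_mem (add_mem (add_mem htop (hmono N (hF0 N a' ha'))) (hF1 N a' ha'))
      have hδ1t0 : δ₁ t = 0 := hdisj (N + 1) _ ht2 htF
      obtain ⟨y, hy, hδy⟩ := hacy N t ht hδ1t0
      have hyF : y ∈ F N := Finset.le_sup (f := Mn) (Finset.self_mem_range_succ N) hy
      have ha''F : (t + a') - (δ₀ + δ₁) y ∈ F N := by
        have heq : (t + a') - (δ₀ + δ₁) y = a' - δ₀ y := by
          simp only [LinearMap.add_apply, hδy]; abel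
        rw [heq]
        exact sub_mem ha' (hF0 N y hyF)
      have hδa'' : (δ₀ + δ₁) ((t + a') - (δ₀ + δ₁) y) = 0 := by
        rw [map_sub, hδa]
        have h2 := LinearMap.congr_fun hnil y
        simp only [LinearMap.comp_apply, LinearMap.zero_apply] at h2
        rw [h2]; abel
      obtain ⟨b', hb'⟩ := ih _ ha''F hδa''
      exact ⟨b' + y, by rw [map_add, hb']; abel⟩
  intro a hδa
  have ha : a ∈ ⨆ i, Mn i := by
    rw [hM.submodule_iSup_eq_top]; trivial
  obtain ⟨s, hs⟩ := Submodule.mem_iSup_iff_exists_finset.mp ha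
  have haF : a ∈ F (s.sup id) := by
    refine (iSup_le fun i => iSup_le fun hi => ?_ : (⨆ i ∈ s, Mn i) ≤ F (s.sup id)) hs
    exact Finset.le_sup (f := Mn)
      (Finset.mem_range.mpr (Nat.lt_succ_of_le (Finset.le_sup (f := id) hi)))
  exact key _ a haF hδa
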